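/- Let $G$, $H$ be finite groups, $A$ an abelian group, and suppose $(U,\phi)$, with $U \le G\times H$ and $\phi : U \to A$, satisfies $p_1(U) = G$, $p_2(U) = H$. Let $(K,\kappa) = (k_1(U),\phi_1)$ and $(L,\lambda) = (k_2(U),\phi_2)$. If $(K',\kappa')$ is another pair with $K' \trianglelefteq G$, $\kappa'$ $G$-stable, and $K < K'$, and if $(V,\psi)$ is a pair with $p_1(V)=G$, $p_2(V)=H$, $l_0(V,\psi) = (K',\kappa')$, and $r_0(V,\psi) = (L',\lambda')$ with $(L,\lambda) \le (L',\lambda')$, then $L < L'$. -/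
import Mathlib


def k1 {G H : Type*} [Group G] [Group H] (U : Subgroup (G × H)) : Subgroup G :=
  U.comap (MonoidHom.inl G H)

def k2 {G H : Type*} [Group G] [Group H] (U : Subgroup (G × H)) : Subgroup H :=
  U.comap (MonoidHom.inr G H)

def p1 {G H : Type*} [Group G] [Group H] (U : Subgroup (G × H)) : Subgroup G :=
  U.map (MonoidHom.fst G H)

def p2 {G H : Type*} [Group G] [Group H] (U : Subgroup (G × H)) : Subgroup H :=
  U.map (MonoidHom.snd G H)

section aux

variable {G H : Type*} [Group G] [Group H]

lemma card_eq_fst (U : Subgroup (G × H)) (hU1 : p1 U = ⊤) :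
    Nat.card U = Nat.card G * Nat.card (k2 U) := by
  let f : U →* G := (MonoidHom.fst G H).comp U.subtype
  have hsurj : Function.Surjective f := by
    intro g
    have hg : g ∈ p1 U := hU1 ▸ Subgroup.mem_top g
    obtain ⟨u, hu, rfl⟩ := hg
    exact ⟨⟨u, hu⟩, rfl⟩
  have e1 : U ⧸ f.ker ≃ G := (QuotientGroup.quotientKerEquivOfSurjective f hsurj).toEquiv
  have e2 : f.ker ≃ k2 U := by
    refine ⟨fun u => ⟨(u : U).1.2, ?_⟩, fun h => ⟨⟨((1 : G), (h : H)), h.2⟩, ?_⟩, ?_, ?_⟩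
    · have h1 : (u : U).1.1 = 1 := u.2
      have : ((u : U) : G × H) = ((1 : G), (u : U).1.2) := by
        ext <;> simp [h1]
      show ((1 : G), (u : U).1.2) ∈ U
      rw [← this]; exact (u : U).2
    · show f ⟨((1 : G), (h : H)), h.2⟩ = 1
      rfl
    · intro u
      ext
      · exact (u.2 : (u : U).1.1 = 1).symm
      · rfl
    · intro h
      rfl
  calc Nat.card U = Nat.card (U ⧸ f.ker) * Nat.card f.ker :=
        Subgroup.card_eq_card_quotient_mul_card_subgroup f.ker
    _ = Nat.card G * Nat.card (k2 U) := by rw [Nat.card_congr e1, Nat.card_congr e2]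

lemma card_eq_snd (U : Subgroup (G × H)) (hU2 : p2 U = ⊤) :
    Nat.card U = Nat.card H * Nat.card (k1 U) := by
  let f : U →* H := (MonoidHom.snd G H).comp U.subtype
  have hsurj : Function.Surjective f := by
    intro h
    have hg : h ∈ p2 U := hU2 ▸ Subgroup.mem_top h
    obtain ⟨u, hu, rfl⟩ := hg
    exact ⟨⟨u, hu⟩, rfl⟩
  have e1 : U ⧸ f.ker ≃ H := (QuotientGroup.quotientKerEquivOfSurjective f hsurj).toEquiv
  have e2 : f.ker ≃ k1 U := by
    refine ⟨fun u => ⟨(u : U).1.1, ?_⟩, fun g => ⟨⟨((g : G), (1 : H)), g.2⟩, ?_⟩, ?_, ?_⟩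
    · have h1 : (u : U).1.2 = 1 := u.2
      have : ((u : U) : G × H) = ((u : U).1.1, (1 : H)) := by
        ext <;> simp [h1]
      show ((u : U).1.1, (1 : H)) ∈ U
      rw [← this]; exact (u : U).2
    · show f ⟨((g : G), (1 : H)), g.2⟩ = 1
      rfl
    · intro u
      ext
      · rfl
      · exact (u.2 : (u : U).1.2 = 1).symm
    · intro g
      rfl
  calc Nat.card U = Nat.card (U ⧸ f.ker) * Nat.card f.ker :=
        Subgroup.card_eq_card_quotient_mul_card_subgroup f.ker
    _ = Nat.card H * Nat.card (k1 U) := by rw [Nat.card_congr e1, Nat.card_congr e2]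

end aux

/-- If `(U,φ)` and `(V,ψ)` both have full projections on `G` and `H`, `k1 U < k1 V`,
and `r₀(U,φ) ≤ r₀(V,ψ)` (so `k2 U ≤ k2 V` and `ψ₂` restricts to `φ₂`), then
`k2 U < k2 V`. -/
theorem k2_lt_of_k1_lt {G H A : Type*} [Group G] [Group H] [CommGroup A]
    [Finite G] [Finite H]
    (U V : Subgroup (G × H)) (φ : U →* A) (ψ : V →* A)
    (hU1 : p1 U = ⊤) (hU2 : p2 U = ⊤) (hV1 : p1 V = ⊤) (hV2 : p2 V = ⊤)
    (hKlt : k1 U < k1 V) (hLle : k2 U ≤ k2 V)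
    (hres : ∀ (h : H) (hu : ((1 : G), h) ∈ U) (hv : ((1 : G), h) ∈ V),
      (φ ⟨((1 : G), h), hu⟩)⁻¹ = (ψ ⟨((1 : G), h), hv⟩)⁻¹) :
    k2 U < k2 V := by
  refine lt_of_le_of_ne hLle (fun heq => ?_)
  -- card relations
  have hU : Nat.card G * Nat.card (k2 U) = Nat.card H * Nat.card (k1 U) :=
    (card_eq_fst U hU1).symm.trans (card_eq_snd U hU2)
  have hV : Nat.card G * Nat.card (k2 V) = Nat.card H * Nat.card (k1 V) :=
    (card_eq_fst V hV1).symm.trans (card_eq_snd V hV2)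
  have hcardlt : Nat.card (k1 U) < Nat.card (k1 V) := by
    exact Set.Finite.card_lt_card (Set.toFinite ((k1 V : Set G))) (by exact_mod_cast hKlt)
  have hHpos : 0 < Nat.card H := Nat.card_pos
  have : Nat.card G * Nat.card (k2 U) < Nat.card G * Nat.card (k2 V) := by
    rw [hU, hV]
    exact mul_lt_mul_of_pos_left hcardlt hHpos
  rw [heq] at this
  exact lt_irrefl _ this
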